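/- Euler's identity: for 0 < q < 1 and any complex number t, the infinite product ∏_{j=0}^∞ (1 + q^j t) equals the sum ∑_{j=0}^∞ q^{j(j-1)/2} t^j / (q;q)_j, where (q;q)_j = ∏_{s=1}^j (1 - q^s). -/

import Mathlib

open Filter Finset

namespace EulerIdentityAux

/-- The general term of Euler's series. -/
noncomputable def E (q : ℝ) (t : ℂ) (j : ℕ) : ℂ :=
  (q : ℂ) ^ (j * (j - 1) / 2) * t ^ j / (∏ s ∈ Finset.range j, (1 - (q : ℂ) ^ (s + 1)))

variable {q : ℝ} (hq0 : 0 < q) (hq1 : q < 1)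

lemma exp_succ (j : ℕ) : (j + 1) * ((j + 1) - 1) / 2 = j * (j - 1) / 2 + j := by
  rw [← Finset.sum_range_id, ← Finset.sum_range_id, Finset.sum_range_succ]

include hq0 hq1 in
lemma factor_pos (s : ℕ) : 0 < 1 - q ^ (s + 1) := by
  have : q ^ (s + 1) < 1 := pow_lt_one₀ hq0.le hq1 (Nat.succ_ne_zero s)
  linarith

include hq0 hq1 in
lemma prod_ne_zero (j : ℕ) : (∏ s ∈ Finset.range j, (1 - (q : ℂ) ^ (s + 1))) ≠ 0 := by
  refine Finset.prod_ne_zero_iff.2 fun s _ => ?_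
  have h := factor_pos hq0 hq1 s
  have : (1 - (q : ℂ) ^ (s + 1)) = ((1 - q ^ (s + 1) : ℝ) : ℂ) := by push_cast; ring
  rw [this]
  exact_mod_cast ne_of_gt h

lemma E_zero (t : ℂ) : E q t 0 = 1 := by simp [E]

include hq0 hq1 in
lemma E_succ (t : ℂ) (j : ℕ) :
    E q t (j + 1) = E q t j * ((q : ℂ) ^ j * t / (1 - (q : ℂ) ^ (j + 1))) := by
  have hne := prod_ne_zero hq0 hq1 j
  have hfe : (1 - (q : ℂ) ^ (j + 1)) ≠ 0 := by
    have h := factor_pos hq0 hq1 j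
    have : (1 - (q : ℂ) ^ (j + 1)) = ((1 - q ^ (j + 1) : ℝ) : ℂ) := by push_cast; ring
    rw [this]
    exact_mod_cast ne_of_gt h
  rw [E, E, exp_succ, pow_add, Finset.prod_range_succ, pow_succ]
  field_simp

include hq0 hq1 in
lemma norm_ratio (t : ℂ) (n : ℕ) :
    ‖(q : ℂ) ^ n * t / (1 - (q : ℂ) ^ (n + 1))‖ = q ^ n * ‖t‖ / (1 - q ^ (n + 1)) := by
  have hfp := factor_pos hq0 hq1 n
  have e1 : ‖(q : ℂ)‖ = q := by rw [Complex.norm_real, Real.norm_eq_abs, abs_of_pos hq0]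
  have e2 : ‖(1 - (q : ℂ) ^ (n + 1))‖ = 1 - q ^ (n + 1) := by
    rw [show (1 - (q : ℂ) ^ (n + 1)) = ((1 - q ^ (n + 1) : ℝ) : ℂ) by push_cast; ring,
      Complex.norm_real, Real.norm_eq_abs, abs_of_pos hfp]
  rw [norm_div, norm_mul, norm_pow, e1, e2]

include hq0 hq1 in
lemma norm_ratio_le (t : ℂ) (n : ℕ) :
    ‖(q : ℂ) ^ n * t / (1 - (q : ℂ) ^ (n + 1))‖ ≤ q ^ n * ‖t‖ / (1 - q) := by
  rw [norm_ratio hq0 hq1 t n]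
  have hfp := factor_pos hq0 hq1 n
  have h1 : q ^ (n + 1) ≤ q := by
    calc q ^ (n + 1) ≤ q ^ 1 := pow_le_pow_of_le_one hq0.le hq1.le (by omega)
    _ = q := pow_one q
  have h2 : 1 - q ≤ 1 - q ^ (n + 1) := by linarith
  have h3 : (0 : ℝ) < 1 - q := by linarith
  gcongr

include hq0 hq1 in
lemma E_summable (t : ℂ) : Summable (E q t) := by
  apply summable_of_ratio_norm_eventually_le (r := 1 / 2) (by norm_num)
  have h1 : Tendsto (fun n : ℕ => q ^ n * ‖t‖ / (1 - q)) atTop (nhds 0) := by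
    have := tendsto_pow_atTop_nhds_zero_of_lt_one hq0.le hq1
    simpa using (this.mul_const ‖t‖).div_const (1 - q)
  filter_upwards [h1.eventually_le_const (by norm_num : (0 : ℝ) < 1 / 2)] with n hn
  rw [E_succ hq0 hq1 t n, norm_mul, mul_comm]
  have := (norm_ratio_le hq0 hq1 t n).trans hn
  gcongr

omit hq0 hq1 in
lemma E_scale (c t : ℂ) (j : ℕ) : E q (c * t) j = c ^ j * E q t j := by
  rw [E, E, mul_pow]; ring

include hq0 hq1 in
lemma one_sub_ne_zero (j : ℕ) : (1 - (q : ℂ) ^ (j + 1)) ≠ 0 := by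
  have h := factor_pos hq0 hq1 j
  rw [show (1 - (q : ℂ) ^ (j + 1)) = ((1 - q ^ (j + 1) : ℝ) : ℂ) by push_cast; ring]
  exact_mod_cast ne_of_gt h

include hq0 hq1 in
lemma E_rec (x : ℂ) (j : ℕ) :
    E q x (j + 1) = E q ((q : ℂ) * x) (j + 1) + x * E q ((q : ℂ) * x) j := by
  have hfe := one_sub_ne_zero hq0 hq1 j
  rw [E_scale, E_scale, E_succ hq0 hq1 x j]
  field_simp
  ring

include hq0 hq1 in
lemma func_eq (x : ℂ) :
    (∑' j, E q x j) = (1 + x) * ∑' j, E q ((q : ℂ) * x) j := by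
  have hs1 := E_summable hq0 hq1 x
  have hs2 := E_summable hq0 hq1 ((q : ℂ) * x)
  have hs2' : Summable (fun j => E q ((q : ℂ) * x) (j + 1)) := (summable_nat_add_iff 1).2 hs2
  rw [Summable.tsum_eq_zero_add hs1, E_zero, tsum_congr (E_rec hq0 hq1 x),
    Summable.tsum_add hs2' (hs2.mul_left x), tsum_mul_left, Summable.tsum_eq_zero_add hs2, E_zero]
  ring

include hq0 hq1 in
lemma iter_eq (t : ℂ) (n : ℕ) :
    (∑' j, E q t j) =
      (∏ j ∈ Finset.range n, (1 + (q : ℂ) ^ j * t)) * ∑' j, E q ((q : ℂ) ^ n * t) j := by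
  induction n with
  | zero => simp
  | succ n ih =>
    rw [Finset.prod_range_succ, ih, func_eq hq0 hq1 ((q : ℂ) ^ n * t),
      show ((q : ℂ) * ((q : ℂ) ^ n * t)) = (q : ℂ) ^ (n + 1) * t by ring]
    ring

set_option maxHeartbeats 1000000 in
include hq0 hq1 in
lemma tail_tendsto (t : ℂ) :
    Tendsto (fun n : ℕ => ∑' j, E q ((q : ℂ) ^ n * t) j) atTop (nhds 1) := by
  have hsn : Summable (fun j => ‖E q t j‖) := summable_norm_iff.mpr (E_summable hq0 hq1 t)
  have hsn' : Summable (fun j => ‖E q t (j + 1)‖) := (summable_nat_add_iff 1).2 hsn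
  set M : ℝ := ∑' j, ‖E q t (j + 1)‖ with hM
  have e1 : ‖(q : ℂ)‖ = q := by rw [Complex.norm_real, Real.norm_eq_abs, abs_of_pos hq0]
  have key : ∀ n : ℕ, ‖(∑' j, E q ((q : ℂ) ^ n * t) j) - 1‖ ≤ q ^ n * M := by
    intro n
    have hs := E_summable hq0 hq1 ((q : ℂ) ^ n * t)
    have hs' : Summable (fun j => E q ((q : ℂ) ^ n * t) (j + 1)) := (summable_nat_add_iff 1).2 hs
    have hsn2 : Summable (fun j => ‖E q ((q : ℂ) ^ n * t) (j + 1)‖) :=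
      summable_norm_iff.mpr hs'
    rw [Summable.tsum_eq_zero_add hs, E_zero, add_sub_cancel_left]
    have hpt : ∀ j : ℕ, ‖E q ((q : ℂ) ^ n * t) (j + 1)‖ ≤ q ^ n * ‖E q t (j + 1)‖ := by
      intro j
      rw [E_scale, norm_mul, norm_pow, norm_pow, e1]
      have h1 : (q ^ n) ^ (j + 1) ≤ (q ^ n) ^ 1 :=
        pow_le_pow_of_le_one (pow_nonneg hq0.le n) (pow_le_one₀ hq0.le hq1.le) (by omega)
      rw [pow_one] at h1
      have := norm_nonneg (E q t (j + 1))
      nlinarith [pow_nonneg (pow_nonneg hq0.le n) (j + 1)]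
    calc ‖∑' j, E q ((q : ℂ) ^ n * t) (j + 1)‖
        ≤ ∑' j, ‖E q ((q : ℂ) ^ n * t) (j + 1)‖ := norm_tsum_le_tsum_norm hsn2
      _ ≤ ∑' j, q ^ n * ‖E q t (j + 1)‖ := Summable.tsum_le_tsum hpt hsn2 (hsn'.mul_left _)
      _ = q ^ n * M := tsum_mul_left
  rw [tendsto_iff_norm_sub_tendsto_zero]
  refine squeeze_zero (fun n => norm_nonneg _) key ?_
  have := tendsto_pow_atTop_nhds_zero_of_lt_one hq0.le hq1
  simpa using this.mul_const M

include hq0 hq1 in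
lemma mult (t : ℂ) : Multipliable (fun j : ℕ => (1 + (q : ℂ) ^ j * t)) := by
  by_cases h : ∀ j : ℕ, 1 + (q : ℂ) ^ j * t ≠ 0
  · refine Complex.multipliable_of_summable_log ?_
    have e1 : ‖(q : ℂ)‖ = q := by rw [Complex.norm_real, Real.norm_eq_abs, abs_of_pos hq0]
    refine Summable.of_norm_bounded_eventually (g := fun j => 3 / 2 * (q ^ j * ‖t‖)) ?_ ?_
    · exact ((summable_geometric_of_lt_one hq0.le hq1).mul_right ‖t‖).mul_left _
    · rw [Nat.cofinite_eq_atTop]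
      have h1 : Tendsto (fun j : ℕ => q ^ j * ‖t‖) atTop (nhds 0) := by
        simpa using (tendsto_pow_atTop_nhds_zero_of_lt_one hq0.le hq1).mul_const ‖t‖
      filter_upwards [h1.eventually_le_const (by norm_num : (0 : ℝ) < 1 / 2)] with j hj
      have hx : ‖(q : ℂ) ^ j * t‖ ≤ 1 / 2 := by
        rw [norm_mul, norm_pow, e1]; exact hj
      calc ‖Complex.log (1 + (q : ℂ) ^ j * t)‖ ≤ 3 / 2 * ‖(q : ℂ) ^ j * t‖ :=
            Complex.norm_log_one_add_half_le_self hx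
        _ = 3 / 2 * (q ^ j * ‖t‖) := by rw [norm_mul, norm_pow, e1]
  · push_neg at h
    obtain ⟨j0, hj0⟩ := h
    refine ⟨0, ?_⟩
    have hev : ∀ᶠ s : Finset ℕ in atTop, ∏ i ∈ s, (1 + (q : ℂ) ^ i * t) = 0 := by
      filter_upwards [eventually_ge_atTop ({j0} : Finset ℕ)] with s hs
      exact Finset.prod_eq_zero (hs (Finset.mem_singleton_self j0)) hj0
    exact Filter.Tendsto.congr' (hev.mono fun s hs => hs.symm) tendsto_const_nhds

end EulerIdentityAux

open EulerIdentityAux in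
/-- Euler's identity: for `0 < q < 1` and any complex `t`,
`∏_{j=0}^∞ (1 + q^j t) = ∑_{j=0}^∞ q^{j(j-1)/2} t^j / (q;q)_j`,
where `(q;q)_j = ∏_{s=1}^j (1 - q^s)`.  Both sides converge absolutely. -/
theorem euler_identity (q : ℝ) (hq0 : 0 < q) (hq1 : q < 1) (t : ℂ) :
    Multipliable (fun j : ℕ => (1 + (q : ℂ) ^ j * t)) ∧
    Summable (fun j : ℕ =>
      (q : ℂ) ^ (j * (j - 1) / 2) * t ^ j / (∏ s ∈ Finset.range j, (1 - (q : ℂ) ^ (s + 1)))) ∧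
    (∏' j : ℕ, (1 + (q : ℂ) ^ j * t)) =
      ∑' j : ℕ,
        (q : ℂ) ^ (j * (j - 1) / 2) * t ^ j / (∏ s ∈ Finset.range j, (1 - (q : ℂ) ^ (s + 1))) := by
  have hm := mult hq0 hq1 t
  refine ⟨hm, E_summable hq0 hq1 t, ?_⟩
  have hP := HasProd.tendsto_prod_nat hm.hasProd
  have hT := tail_tendsto hq0 hq1 t
  have hmul := hP.mul hT
  rw [mul_one] at hmul
  have : Filter.Tendsto (fun _ : ℕ => ∑' j, E q t j) atTop
      (nhds (∏' j : ℕ, (1 + (q : ℂ) ^ j * t))) := by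
    refine hmul.congr fun n => ?_
    exact (iter_eq hq0 hq1 t n).symm
  exact tendsto_nhds_unique this tendsto_const_nhds
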